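/- For any prime power q, any δ ∈ [0,1), any η > 0, and any ε > 0, there exists an [n, δ, ε]_q-erasure code family of rate 1 − δ − η and size t, provided t ≥ 2/(η·ε·log₂ q) and n is sufficiently large (n ≥ C·log(1/ε)/(η·log q) for an absolute constant C). -/

import Mathlib

open Finset
set_option maxHeartbeats 1000000

/-! ### Auxiliary lemmas -/

lemma aux_choose_bound (t m0 : ℕ) (ε : ℝ) (hε : 0 < ε) (hle : ε * t ≤ m0) (hm0 : 0 < m0) :
    (t.choose m0 : ℝ) ≤ (Real.exp 1 / ε) ^ m0 := by
  have h1 : (t.choose m0 : ℝ) ≤ (t : ℝ) ^ m0 / m0.factorial := Nat.choose_le_pow_div m0 t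
  have h2 : ((m0 : ℝ)) ^ m0 / m0.factorial ≤ Real.exp m0 :=
    Real.pow_div_factorial_le_exp _ (by positivity) _
  have hm0R : (0 : ℝ) < m0 := by exact_mod_cast hm0
  have hfac : (0 : ℝ) < m0.factorial := by exact_mod_cast m0.factorial_pos
  have key : (t : ℝ) ^ m0 / m0.factorial = ((t : ℝ) / m0) ^ m0 * ((m0 : ℝ) ^ m0 / m0.factorial) := by
    rw [div_pow]
    field_simp
  have htm : (t : ℝ) / m0 ≤ 1 / ε := by
    rw [div_le_div_iff₀ hm0R hε]
    nlinarith
  have ht0 : (0:ℝ) ≤ (t:ℝ)/m0 := by positivity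
  calc (t.choose m0 : ℝ) ≤ ((t : ℝ) / m0) ^ m0 * ((m0 : ℝ) ^ m0 / m0.factorial) := by
        rw [← key]; exact h1
    _ ≤ (1 / ε) ^ m0 * Real.exp m0 := by
        apply mul_le_mul (pow_le_pow_left₀ ht0 htm m0) h2 (by positivity) (by positivity)
    _ = (Real.exp 1 / ε) ^ m0 := by
        rw [← Real.exp_one_pow, ← mul_pow]; ring_nf

lemma aux_sol_count (F : Type) [Field F] [Fintype F] [DecidableEq F] (m n : ℕ)
    (c : Fin n → F) (hc : c ≠ 0) :
    ((univ : Finset (Matrix (Fin m) (Fin n) F)).filter (fun H => H.mulVec c = 0)).card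
      ≤ Fintype.card F ^ ((n - 1) * m) := by
  obtain ⟨j₀, hj₀⟩ : ∃ j, c j ≠ 0 := Function.ne_iff.mp hc
  have hcard : Fintype.card (Fin m → {j : Fin n // j ≠ j₀} → F)
      = Fintype.card F ^ ((n - 1) * m) := by
    rw [Fintype.card_fun, Fintype.card_fun, ← pow_mul]
    congr 2
    · rw [Fintype.card_subtype_compl, Fintype.card_subtype_eq, Fintype.card_fin]
    · exact Fintype.card_fin m
  rw [← hcard]
  classical
  have hinj := Finset.card_le_card_of_injOn
    (f := fun (H : Matrix (Fin m) (Fin n) F) (i : Fin m) (j : {j : Fin n // j ≠ j₀}) => H i j.1)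
    (s := (univ : Finset (Matrix (Fin m) (Fin n) F)).filter (fun H => H.mulVec c = 0))
    (t := univ) (fun _ _ => mem_univ _) ?_
  · rw [Finset.card_univ] at hinj
    exact hinj
  · intro H hH H' hH' hfeq
    simp only [mem_coe, mem_filter, mem_univ, true_and] at hH hH'
    have hoffe : ∀ (i : Fin m) (j' : Fin n), j' ≠ j₀ → H i j' = H' i j' :=
      fun i j' h => congrFun (congrFun hfeq i) ⟨j', h⟩
    funext i j
    by_cases hj : j = j₀
    · subst hj
      have e1 : H i j * c j + ∑ j' ∈ univ.erase j, H i j' * c j' = 0 := by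
        rw [Finset.add_sum_erase univ (fun j' => H i j' * c j') (mem_univ j)]
        simpa [Matrix.mulVec, dotProduct] using congrFun hH i
      have e2 : H' i j * c j + ∑ j' ∈ univ.erase j, H' i j' * c j' = 0 := by
        rw [Finset.add_sum_erase univ (fun j' => H' i j' * c j') (mem_univ j)]
        simpa [Matrix.mulVec, dotProduct] using congrFun hH' i
      have esum : ∑ j' ∈ univ.erase j, H i j' * c j' = ∑ j' ∈ univ.erase j, H' i j' * c j' :=
        Finset.sum_congr rfl fun j' hj' => by
          rw [hoffe i j' (Finset.ne_of_mem_erase hj')]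
      have : H i j * c j = H' i j * c j := by linear_combination e1 - e2 - esum
      exact mul_right_cancel₀ hj₀ this
    · exact hoffe i j hj

lemma aux_bad_card (F : Type) [Field F] [Fintype F] [DecidableEq F] (m n : ℕ)
    (S : Finset (Fin n)) :
    (Fintype.card F - 1) *
      ((univ : Finset (Matrix (Fin m) (Fin n) F)).filter (fun H =>
        ∃ c : Fin n → F, c ≠ 0 ∧ (∀ j ∉ S, c j = 0) ∧ H.mulVec c = 0)).card
      ≤ Fintype.card F ^ S.card * Fintype.card F ^ ((n - 1) * m) := by
  classical
  set D : Finset (Fin n → F) :=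
    univ.filter (fun c : Fin n → F => c ≠ 0 ∧ ∀ j ∉ S, c j = 0) with hD
  set Bad : Finset (Matrix (Fin m) (Fin n) F) :=
    univ.filter (fun H => ∃ c : Fin n → F, c ≠ 0 ∧ (∀ j ∉ S, c j = 0) ∧ H.mulVec c = 0) with hB
  have step1 : ∀ H ∈ Bad, Fintype.card F - 1 ≤ (D.filter (fun c => H.mulVec c = 0)).card := by
    intro H hH
    simp only [hB, mem_filter, mem_univ, true_and] at hH
    obtain ⟨c₀, hc₀, hsupp, hker⟩ := hH
    have hmaps : ∀ lam ∈ (univ : Finset F).erase 0,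
        lam • c₀ ∈ D.filter (fun c => H.mulVec c = 0) := by
      intro lam hlam
      have hlam0 : lam ≠ 0 := ne_of_mem_erase hlam
      simp only [hD, mem_filter, mem_univ, true_and]
      refine ⟨⟨smul_ne_zero hlam0 hc₀, fun j hj => by simp [hsupp j hj]⟩, ?_⟩
      rw [Matrix.mulVec_smul, hker, smul_zero]
    have hinj := Finset.card_le_card_of_injOn (f := fun lam : F => lam • c₀)
      (s := (univ : Finset F).erase 0) (t := D.filter (fun c => H.mulVec c = 0))
      hmaps ?_
    · rwa [Finset.card_erase_of_mem (mem_univ _), Finset.card_univ] at hinj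
    · intro a _ b _ hab
      by_contra hne
      have hab' : a • c₀ = b • c₀ := hab
      have : (a - b) • c₀ = 0 := by rw [sub_smul, hab', sub_self]
      rcases smul_eq_zero.mp this with h | h
      · exact hne (sub_eq_zero.mp h)
      · exact hc₀ h
  have step2 : ∑ H ∈ Bad, (D.filter (fun c => H.mulVec c = 0)).card
      = ∑ c ∈ D, (Bad.filter (fun H : Matrix (Fin m) (Fin n) F => H.mulVec c = 0)).card := by
    simp only [Finset.card_filter]
    exact Finset.sum_comm
  have step3 : ∀ c ∈ D,
      (Bad.filter (fun H : Matrix (Fin m) (Fin n) F => H.mulVec c = 0)).card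
        ≤ Fintype.card F ^ ((n - 1) * m) := by
    intro c hc
    simp only [hD, mem_filter, mem_univ, true_and] at hc
    calc (Bad.filter (fun H : Matrix (Fin m) (Fin n) F => H.mulVec c = 0)).card
        ≤ ((univ : Finset (Matrix (Fin m) (Fin n) F)).filter (fun H => H.mulVec c = 0)).card :=
          Finset.card_le_card (Finset.filter_subset_filter _ (Finset.subset_univ _))
      _ ≤ Fintype.card F ^ ((n - 1) * m) := aux_sol_count F m n c hc.1
  have step4 : D.card ≤ Fintype.card F ^ S.card := by
    have hinj := Finset.card_le_card_of_injOn
      (f := fun (c : Fin n → F) (j : {j : Fin n // j ∈ S}) => c j.1)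
      (s := D) (t := univ) (fun _ _ => mem_univ _) ?_
    · rwa [Finset.card_univ, Fintype.card_fun, Fintype.card_coe] at hinj
    · intro c hc c' hc' hcc
      simp only [hD, mem_coe, mem_filter, mem_univ, true_and] at hc hc'
      funext j
      by_cases hj : j ∈ S
      · exact congrFun hcc ⟨j, hj⟩
      · rw [hc.2 j hj, hc'.2 j hj]
  calc (Fintype.card F - 1) * Bad.card = ∑ _H ∈ Bad, (Fintype.card F - 1) := by
        rw [Finset.sum_const, smul_eq_mul, mul_comm]
    _ ≤ ∑ H ∈ Bad, (D.filter (fun c => H.mulVec c = 0)).card := Finset.sum_le_sum step1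
    _ = ∑ c ∈ D, (Bad.filter (fun H : Matrix (Fin m) (Fin n) F => H.mulVec c = 0)).card := step2
    _ ≤ ∑ _c ∈ D, Fintype.card F ^ ((n - 1) * m) := Finset.sum_le_sum step3
    _ = D.card * Fintype.card F ^ ((n - 1) * m) := by rw [Finset.sum_const, smul_eq_mul]
    _ ≤ Fintype.card F ^ S.card * Fintype.card F ^ ((n - 1) * m) :=
        Nat.mul_le_mul_right _ step4

lemma aux_tuple_bound (Ω : Type) [Fintype Ω] [DecidableEq Ω] (t m0 : ℕ) (A : Finset Ω) :
    ((univ : Finset (Fin t → Ω)).filter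
        (fun ω => m0 ≤ (univ.filter (fun i => ω i ∈ A)).card)).card
      ≤ t.choose m0 * A.card ^ m0 * Fintype.card Ω ^ (t - m0) := by
  classical
  have hsub : (univ : Finset (Fin t → Ω)).filter
        (fun ω => m0 ≤ (univ.filter (fun i => ω i ∈ A)).card)
      ⊆ (Finset.powersetCard m0 (univ : Finset (Fin t))).biUnion
          (fun T => Fintype.piFinset (fun i => if i ∈ T then A else univ)) := by
    intro ω hω
    simp only [mem_filter, mem_univ, true_and] at hω
    obtain ⟨T, hTsub, hTcard⟩ := Finset.exists_subset_card_eq hω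
    refine Finset.mem_biUnion.mpr ⟨T, Finset.mem_powersetCard.mpr ⟨Finset.subset_univ _, hTcard⟩, ?_⟩
    rw [Fintype.mem_piFinset]
    intro i
    by_cases hi : i ∈ T
    · simp only [hi, if_true]
      have := hTsub hi
      simp only [mem_filter, mem_univ, true_and] at this
      exact this
    · simp [hi]
  calc ((univ : Finset (Fin t → Ω)).filter
        (fun ω => m0 ≤ (univ.filter (fun i => ω i ∈ A)).card)).card
      ≤ ((Finset.powersetCard m0 (univ : Finset (Fin t))).biUnion
          (fun T => Fintype.piFinset (fun i => if i ∈ T then A else univ))).card :=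
        Finset.card_le_card hsub
    _ ≤ ∑ T ∈ Finset.powersetCard m0 (univ : Finset (Fin t)),
          (Fintype.piFinset (fun i => if i ∈ T then A else univ)).card :=
        Finset.card_biUnion_le
    _ ≤ ∑ _T ∈ Finset.powersetCard m0 (univ : Finset (Fin t)),
          A.card ^ m0 * Fintype.card Ω ^ (t - m0) := by
        refine Finset.sum_le_sum fun T hT => ?_
        obtain ⟨-, hTcard⟩ := Finset.mem_powersetCard.mp hT
        rw [Fintype.card_piFinset]
        have hite : ∀ i : Fin t, (if i ∈ T then A else univ).card
            = if i ∈ T then A.card else Fintype.card Ω := by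
          intro i; split <;> simp [Finset.card_univ]
        rw [Finset.prod_congr rfl (fun i _ => hite i), Finset.prod_ite, Finset.prod_const,
          Finset.prod_const]
        have h1 : (univ.filter (fun i : Fin t => i ∈ T)).card = m0 := by
          rw [Finset.filter_univ_mem]; exact hTcard
        have h2 : (univ.filter (fun i : Fin t => i ∉ T)).card = t - m0 := by
          rw [Finset.filter_not, Finset.card_sdiff_of_subset (Finset.filter_subset _ _),
            Finset.filter_univ_mem, Finset.card_univ, Fintype.card_fin, hTcard]
        rw [h1, h2]
    _ = t.choose m0 * A.card ^ m0 * Fintype.card Ω ^ (t - m0) := by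
        rw [Finset.sum_const, Finset.card_powersetCard, Finset.card_univ, Fintype.card_fin,
          smul_eq_mul, mul_assoc]

lemma aux_numeric (q n t m s m0 : ℕ) (ε η : ℝ)
    (hq : 2 ≤ q) (hn : 1 ≤ n)
    (hε : 0 < ε) (hη : 0 < η)
    (hsm : s ≤ m) (hm0t : m0 ≤ t)
    (hgap : η * n - 1 ≤ (m : ℝ) - s)
    (hεtm0 : ε * t < m0)
    (hεt : 2 * Real.log 2 / (η * Real.log q) ≤ ε * t)
    (hlogε : Real.log (1 / ε) ≤ η * n * Real.log q / 200)
    (hmax : 3.5 ≤ η * n * Real.log q ∨ 3.5 ≤ Real.log q) :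
    (2:ℝ) ^ n * (t.choose m0) *
        ((q:ℝ) ^ s * (q:ℝ) ^ ((n - 1) * m) / ((q:ℝ) - 1)) ^ m0 *
        ((q:ℝ) ^ (m * n)) ^ (t - m0)
      < ((q:ℝ) ^ (m * n)) ^ t := by
  have hqR : (2:ℝ) ≤ (q:ℝ) := by exact_mod_cast hq
  have hq1 : (1:ℝ) < (q:ℝ) := by linarith
  have hq0 : (0:ℝ) < (q:ℝ) := by linarith
  have hq1' : (0:ℝ) < (q:ℝ) - 1 := by linarith
  have hL : (0:ℝ) < Real.log q := Real.log_pos hq1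
  set L : ℝ := Real.log q with hLdef
  have hnR : (1:ℝ) ≤ (n:ℝ) := by exact_mod_cast hn
  have hlog2 : (0:ℝ) < Real.log 2 := Real.log_pos (by norm_num)
  have hlog2' : Real.log 2 < 0.6931471808 := Real.log_two_lt_d9
  have hεtpos : 0 < ε * t := lt_of_lt_of_le (by positivity) hεt
  have hm0pos : 0 < m0 := by
    rcases Nat.eq_zero_or_pos m0 with h | h
    · exfalso; rw [h] at hεtm0; push_cast at hεtm0; linarith
    · exact h
  have hX : 0 < η * (n:ℝ) * L := mul_pos (mul_pos hη (by linarith)) hL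
  obtain ⟨X, hXdef⟩ : ∃ X : ℝ, X = η * (n:ℝ) * L := ⟨_, rfl⟩
  rw [← hXdef] at hlogε hmax hX
  set Bd : ℝ := (q:ℝ) ^ s * (q:ℝ) ^ ((n - 1) * m) / ((q:ℝ) - 1) with hBddef
  set W : ℝ := (q:ℝ) ^ (m * n) with hWdef
  have hBdpos : 0 < Bd := by positivity
  have hWpos : 0 < W := by positivity
  have hWsplit : W ^ t = W ^ m0 * W ^ (t - m0) := by
    rw [← pow_add, Nat.add_sub_cancel' hm0t]
  rw [hWsplit]
  have hWtm0 : 0 < W ^ (t - m0) := by positivity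
  rw [mul_lt_mul_iff_left₀ hWtm0]
  have hchoose : (t.choose m0 : ℝ) ≤ (Real.exp 1 / ε) ^ m0 :=
    aux_choose_bound t m0 ε hε (le_of_lt hεtm0) hm0pos
  have step1 : (2:ℝ) ^ n * (t.choose m0) * Bd ^ m0
      ≤ (2:ℝ) ^ n * (Real.exp 1 / ε) ^ m0 * Bd ^ m0 := by
    have h2n : (0:ℝ) < 2 ^ n := by positivity
    have hB : (0:ℝ) ≤ Bd ^ m0 := by positivity
    exact mul_le_mul_of_nonneg_right (mul_le_mul_of_nonneg_left hchoose (le_of_lt h2n)) hB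
  refine lt_of_le_of_lt step1 ?_
  -- core: G bound
  obtain ⟨G, hGdef⟩ : ∃ G : ℝ, G = ((m:ℝ) - s) * L + Real.log ((q:ℝ) - 1) - 1 - Real.log (1/ε) :=
    ⟨_, rfl⟩
  have hlogq1 : L - Real.log 2 ≤ Real.log ((q:ℝ) - 1) := by
    have h1 : (q:ℝ)/2 ≤ (q:ℝ) - 1 := by linarith
    have h2 : Real.log ((q:ℝ)/2) ≤ Real.log ((q:ℝ) - 1) :=
      Real.log_le_log (by positivity) h1
    rwa [Real.log_div (ne_of_gt hq0) (by norm_num)] at h2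
  have hmsL : (η * n - 1) * L ≤ ((m:ℝ) - s) * L :=
    mul_le_mul_of_nonneg_right hgap (le_of_lt hL)
  have hms0 : (0:ℝ) ≤ ((m:ℝ) - s) * L := by
    have hsm' : (s:ℝ) ≤ (m:ℝ) := by exact_mod_cast hsm
    exact mul_nonneg (by linarith) (le_of_lt hL)
  have hGX : X/2 ≤ G := by
    by_cases hcase : 3.5 ≤ X
    · have heq : (η * n - 1) * L = X - L := by rw [hXdef]; ring
      have hstep : X - Real.log 2 - 1 - X/200 ≤ G := by
        rw [hGdef]; linarith [hmsL, hlogq1, hlogε, heq]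
      linarith
    · have hLge : 3.5 ≤ L := by
        rcases hmax with h | h
        · exact absurd h hcase
        · exact h
      push_neg at hcase
      have hstep : L - Real.log 2 - 1 - X/200 ≤ G := by
        rw [hGdef]; linarith [hms0, hlogq1, hlogε]
      linarith
  have hGpos : 0 < G := lt_of_lt_of_le (by linarith) hGX
  have hkey : 2 * Real.log 2 / (η * L) * (X/2) = n * Real.log 2 := by
    rw [hXdef]; field_simp
  have hc1 : (n:ℝ) * Real.log 2 ≤ ε * t * (X/2) := by
    have := mul_le_mul_of_nonneg_right hεt (le_of_lt (by linarith : (0:ℝ) < X/2))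
    rwa [hkey] at this
  have hc2 : ε * t * (X/2) ≤ ε * t * G := mul_le_mul_of_nonneg_left hGX (le_of_lt hεtpos)
  have hc3 : ε * t * G < m0 * G := mul_lt_mul_of_pos_right hεtm0 hGpos
  have hsuff : (n:ℝ) * Real.log 2 < m0 * G := by linarith
  -- logs
  have hLHSpos : (0:ℝ) < (2:ℝ) ^ n * (Real.exp 1 / ε) ^ m0 * Bd ^ m0 := by positivity
  have hlogle : Real.log ((2:ℝ) ^ n * (Real.exp 1 / ε) ^ m0 * Bd ^ m0) < Real.log (W ^ m0) := by
    rw [Real.log_mul (by positivity) (by positivity), Real.log_mul (by positivity) (by positivity),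
      Real.log_pow, Real.log_pow, Real.log_pow, Real.log_pow]
    have hlogeε : Real.log (Real.exp 1 / ε) = 1 + Real.log (1/ε) := by
      rw [Real.log_div (Real.exp_ne_zero 1) (ne_of_gt hε), Real.log_exp, one_div, Real.log_inv]
      ring
    have hlogBd : Real.log Bd = s * L + ((n-1)*m : ℕ) * L - Real.log ((q:ℝ) - 1) := by
      rw [hBddef, Real.log_div (by positivity) (ne_of_gt hq1'),
        Real.log_mul (by positivity) (by positivity), Real.log_pow, Real.log_pow]
    have hlogW : Real.log W = (m * n : ℕ) * L := by rw [hWdef, Real.log_pow]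
    rw [hlogeε, hlogBd, hlogW]
    have hcast1 : (((n-1)*m : ℕ) : ℝ) = ((n:ℝ) - 1) * m := by
      push_cast [Nat.cast_sub hn]; ring
    have hcast2 : ((m * n : ℕ) : ℝ) = (m:ℝ) * n := by push_cast; ring
    rw [hcast1, hcast2]
    have expand : (m0:ℝ) * ((m:ℝ) * n * L)
        - (m0 * (1 + Real.log (1/ε)) + m0 * ((s:ℝ) * L + ((n:ℝ)-1) * m * L - Real.log ((q:ℝ)-1)))
        = m0 * G := by rw [hGdef]; ring
    linarith [expand, hsuff]
  have hfin := Real.exp_lt_exp.mpr hlogle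
  rwa [Real.exp_log hLHSpos, Real.exp_log (by positivity)] at hfin

lemma aux_ncard_ge {t : ℕ} (P : Fin t → Prop) (A : Finset (Fin t)) (h : ∀ i ∈ A, P i)
    (x : ℝ) (hx : x ≤ A.card) : x ≤ (({i : Fin t | P i} : Set (Fin t)).ncard : ℝ) := by
  refine le_trans hx ?_
  have hsub : (A : Set (Fin t)) ⊆ {i : Fin t | P i} := fun i hi => h i (by simpa using hi)
  have hcard := Set.ncard_le_ncard hsub (Set.toFinite _)
  rw [Set.ncard_coe_finset] at hcard
  exact_mod_cast hcard

lemma aux_const_family {F : Type} [Field F] [Fintype F] (t n : ℕ) (δ η ε : ℝ)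
    (hε0 : 0 ≤ ε) (C : Submodule F (Fin n → F))
    (hdim : (1 - δ - η) * n ≤ (Module.finrank F C : ℝ))
    (hcorr : ∀ S : Finset (Fin n), (S.card : ℝ) ≤ δ * n →
      ∀ c ∈ C, ∀ c' ∈ C, (∀ j ∉ S, c j = c' j) → c = c') :
    ∃ Cs : Fin t → Submodule F (Fin n → F),
      (1 - ε) * t ≤
        (({i : Fin t | (1 - δ - η) * n ≤ (Module.finrank F (Cs i) : ℝ)} :
          Set (Fin t)).ncard : ℝ) ∧
      ∀ S : Finset (Fin n), (S.card : ℝ) ≤ δ * n →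
        (1 - ε) * t ≤
          (({i : Fin t | ∀ c ∈ Cs i, ∀ c' ∈ Cs i,
              (∀ j ∉ S, c j = c' j) → c = c'} : Set (Fin t)).ncard : ℝ) := by
  classical
  have hbound : (1 - ε) * t ≤ ((univ : Finset (Fin t)).card : ℝ) := by
    rw [Finset.card_univ, Fintype.card_fin]
    nlinarith [Nat.cast_nonneg (α := ℝ) t]
  refine ⟨fun _ => C, ?_, ?_⟩
  · exact aux_ncard_ge _ univ (fun i _ => hdim) _ hbound
  · intro S hS
    exact aux_ncard_ge _ univ (fun i _ => hcorr S hS) _ hbound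

lemma aux_main (F : Type) [Field F] [Fintype F] (δ η ε : ℝ) (t n : ℕ)
    (hδ0 : 0 ≤ δ) (hη : 0 < η) (hε : 0 < ε) (hε0 : 0 ≤ ε) (hε1 : ε < 1)
    (hn1 : 1 ≤ n) (htpos : 0 < t)
    (hεt : 2 * Real.log 2 / (η * Real.log (Fintype.card F)) ≤ ε * t)
    (hlogε : Real.log (1 / ε) ≤ η * n * Real.log (Fintype.card F) / 200)
    (hmax : 3.5 ≤ η * n * Real.log (Fintype.card F) ∨ 3.5 ≤ Real.log (Fintype.card F)) :
    ∃ Cs : Fin t → Submodule F (Fin n → F),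
      (1 - ε) * t ≤
        (({i : Fin t | (1 - δ - η) * n ≤ (Module.finrank F (Cs i) : ℝ)} :
          Set (Fin t)).ncard : ℝ) ∧
      ∀ S : Finset (Fin n), (S.card : ℝ) ≤ δ * n →
        (1 - ε) * t ≤
          (({i : Fin t | ∀ c ∈ Cs i, ∀ c' ∈ Cs i,
              (∀ j ∉ S, c j = c' j) → c = c'} : Set (Fin t)).ncard : ℝ) := by
  classical
  have hq2 : 2 ≤ Fintype.card F := Fintype.one_lt_card
  set q := Fintype.card F with hqdef
  have hqR : (2:ℝ) ≤ (q:ℝ) := by exact_mod_cast hq2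
  have hq1 : (1:ℝ) < (q:ℝ) := by linarith
  have hL : (0:ℝ) < Real.log q := Real.log_pos hq1
  set L : ℝ := Real.log q with hLdef
  obtain ⟨s, hsdef⟩ : ∃ s : ℕ, s = ⌊δ * n⌋₊ := ⟨_, rfl⟩
  obtain ⟨m, hmdef⟩ : ∃ m : ℕ, m = ⌊(δ + η) * n⌋₊ := ⟨_, rfl⟩
  obtain ⟨m0, hm0def⟩ : ∃ m0 : ℕ, m0 = ⌊ε * t⌋₊ + 1 := ⟨_, rfl⟩
  have hδn0 : (0:ℝ) ≤ δ * n := mul_nonneg hδ0 (Nat.cast_nonneg n)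
  have hδηn0 : (0:ℝ) ≤ (δ + η) * n := mul_nonneg (by linarith) (Nat.cast_nonneg n)
  have hsm : s ≤ m := by
    rw [hsdef, hmdef]
    apply Nat.floor_le_floor
    nlinarith [Nat.cast_nonneg (α := ℝ) n]
  have hmle : (m:ℝ) ≤ (δ + η) * n := by rw [hmdef]; exact Nat.floor_le hδηn0
  have hsle : (s:ℝ) ≤ δ * n := by rw [hsdef]; exact Nat.floor_le hδn0
  have hmgt : (δ + η) * n - 1 < (m:ℝ) := by rw [hmdef]; exact Nat.sub_one_lt_floor _
  have hgap : η * n - 1 ≤ (m:ℝ) - s := by nlinarith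
  have hεtm0 : ε * t < (m0:ℝ) := by
    rw [hm0def]; push_cast; exact Nat.lt_floor_add_one _
  have hm0t : m0 ≤ t := by
    rw [hm0def]
    have hfl : ⌊ε * t⌋₊ < t := by
      rw [Nat.floor_lt (by positivity)]
      calc ε * t < 1 * t := by
            apply mul_lt_mul_of_pos_right hε1
            exact_mod_cast htpos
        _ = t := one_mul _
    omega
  have hcardΩ : Fintype.card (Matrix (Fin m) (Fin n) F) = q ^ (m * n) := by
    have e : Matrix (Fin m) (Fin n) F ≃ (Fin m → Fin n → F) := Equiv.refl _
    rw [Fintype.card_congr e, Fintype.card_fun, Fintype.card_fun, ← pow_mul, Fintype.card_fin,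
      Fintype.card_fin, Nat.mul_comm]
  set Bad : Finset (Fin n) → Finset (Matrix (Fin m) (Fin n) F) := fun S =>
    univ.filter (fun H : Matrix (Fin m) (Fin n) F =>
      ∃ c : Fin n → F, c ≠ 0 ∧ (∀ j ∉ S, c j = 0) ∧ H.mulVec c = 0) with hBaddef
  set 𝒮 : Finset (Finset (Fin n)) :=
    univ.filter (fun S : Finset (Fin n) => (S.card:ℝ) ≤ δ * n) with h𝒮def
  -- real bound on the cardinality of Bad S
  have hBadcard : ∀ S ∈ 𝒮, ((Bad S).card : ℝ)
      ≤ (q:ℝ) ^ s * (q:ℝ) ^ ((n-1)*m) / ((q:ℝ) - 1) := by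
    intro S hS
    have hSmem : (S.card : ℝ) ≤ δ * n := by
      rw [h𝒮def] at hS
      exact (mem_filter.mp hS).2
    have hSs : S.card ≤ s := by
      rw [hsdef]
      exact Nat.le_floor hSmem
    have h1 : (q - 1) * (Bad S).card ≤ q ^ S.card * q ^ ((n-1)*m) := aux_bad_card F m n S
    have h2 : q ^ S.card * q ^ ((n-1)*m) ≤ q ^ s * q ^ ((n-1)*m) :=
      Nat.mul_le_mul_right _ (Nat.pow_le_pow_right (by omega) hSs)
    have h3 : (q - 1) * (Bad S).card ≤ q ^ s * q ^ ((n-1)*m) := le_trans h1 h2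
    have h4 : ((q:ℝ) - 1) * ((Bad S).card : ℝ) ≤ (q:ℝ) ^ s * (q:ℝ) ^ ((n-1)*m) := by
      have hc : (((q - 1) * (Bad S).card : ℕ) : ℝ) ≤ ((q ^ s * q ^ ((n-1)*m) : ℕ) : ℝ) := by
        exact_mod_cast h3
      push_cast [Nat.cast_sub (le_trans one_le_two hq2)] at hc
      linarith
    rw [le_div_iff₀ (by linarith : (0:ℝ) < (q:ℝ) - 1)]
    linarith [h4]
  -- key counting estimate
  have hkey : ∑ S ∈ 𝒮, ((univ : Finset (Fin t → Matrix (Fin m) (Fin n) F)).filter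
        (fun ω => m0 ≤ (univ.filter (fun i => ω i ∈ Bad S)).card)).card
      < Fintype.card (Fin t → Matrix (Fin m) (Fin n) F) := by
    have hWt : (Fintype.card (Fin t → Matrix (Fin m) (Fin n) F) : ℝ)
        = ((q:ℝ)^(m*n))^t := by
      rw [Fintype.card_fun, hcardΩ, Fintype.card_fin]
      push_cast
      ring
    rw [← Nat.cast_lt (α := ℝ), hWt]
    have hnum := aux_numeric q n t m s m0 ε η hq2 hn1 hε hη hsm hm0t hgap hεtm0 hεt hlogε hmax
    calc ((∑ S ∈ 𝒮, ((univ : Finset (Fin t → Matrix (Fin m) (Fin n) F)).filter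
            (fun ω => m0 ≤ (univ.filter (fun i => ω i ∈ Bad S)).card)).card : ℕ) : ℝ)
        = ∑ S ∈ 𝒮, (((univ : Finset (Fin t → Matrix (Fin m) (Fin n) F)).filter
            (fun ω => m0 ≤ (univ.filter (fun i => ω i ∈ Bad S)).card)).card : ℝ) := by
          push_cast
          rfl
      _ ≤ ∑ _S ∈ 𝒮, (t.choose m0 : ℝ) *
            ((q:ℝ)^s * (q:ℝ)^((n-1)*m)/((q:ℝ)-1))^m0 * ((q:ℝ)^(m*n))^(t-m0) := by
          refine Finset.sum_le_sum fun S hS => ?_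
          have h0 := aux_tuple_bound (Matrix (Fin m) (Fin n) F) t m0 (Bad S)
          rw [hcardΩ] at h0
          have h1 : (((univ : Finset (Fin t → Matrix (Fin m) (Fin n) F)).filter
              (fun ω => m0 ≤ (univ.filter (fun i => ω i ∈ Bad S)).card)).card : ℝ)
              ≤ (t.choose m0 : ℝ) * ((Bad S).card:ℝ)^m0 * ((q:ℝ)^(m*n))^(t-m0) := by
            exact_mod_cast h0
          refine le_trans h1 ?_
          apply mul_le_mul_of_nonneg_right _ (by positivity)
          apply mul_le_mul_of_nonneg_left _ (Nat.cast_nonneg _)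
          exact pow_le_pow_left₀ (Nat.cast_nonneg _) (hBadcard S hS) m0
      _ = (𝒮.card : ℝ) * ((t.choose m0 : ℝ) *
            ((q:ℝ)^s * (q:ℝ)^((n-1)*m)/((q:ℝ)-1))^m0 * ((q:ℝ)^(m*n))^(t-m0)) := by
          rw [Finset.sum_const, nsmul_eq_mul]
      _ ≤ (2:ℝ)^n * ((t.choose m0 : ℝ) *
            ((q:ℝ)^s * (q:ℝ)^((n-1)*m)/((q:ℝ)-1))^m0 * ((q:ℝ)^(m*n))^(t-m0)) := by
          have hS2 : (𝒮.card : ℝ) ≤ (2:ℝ)^n := by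
            have h1 : 𝒮.card ≤ 2^n := by
              calc 𝒮.card ≤ (univ : Finset (Finset (Fin n))).card :=
                    Finset.card_le_card (by rw [h𝒮def]; exact Finset.filter_subset _ _)
                _ = 2^n := by rw [Finset.card_univ, Fintype.card_finset, Fintype.card_fin]
            exact_mod_cast h1
          apply mul_le_mul_of_nonneg_right hS2
          refine mul_nonneg (mul_nonneg (Nat.cast_nonneg _) ?_) (by positivity)
          exact pow_nonneg (div_nonneg (by positivity) (by linarith)) _
      _ = (2:ℝ)^n * (t.choose m0 : ℝ) *
            ((q:ℝ)^s * (q:ℝ)^((n-1)*m)/((q:ℝ)-1))^m0 * ((q:ℝ)^(m*n))^(t-m0) := by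
          ring
      _ < ((q:ℝ)^(m*n))^t := hnum
  -- choose a good tuple of parity-check matrices
  obtain ⟨ω, hω⟩ : ∃ ω : Fin t → Matrix (Fin m) (Fin n) F, ∀ S ∈ 𝒮,
      ω ∉ ((univ : Finset (Fin t → Matrix (Fin m) (Fin n) F)).filter
        (fun ω => m0 ≤ (univ.filter (fun i => ω i ∈ Bad S)).card)) := by
    by_contra hcon
    push_neg at hcon
    have hsub : (univ : Finset (Fin t → Matrix (Fin m) (Fin n) F)) ⊆
        𝒮.biUnion (fun S => ((univ : Finset (Fin t → Matrix (Fin m) (Fin n) F)).filter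
          (fun ω => m0 ≤ (univ.filter (fun i => ω i ∈ Bad S)).card))) := by
      intro ω0 _
      obtain ⟨S, hS1, hS2⟩ := hcon ω0
      exact Finset.mem_biUnion.mpr ⟨S, hS1, hS2⟩
    have h1 := Finset.card_le_card hsub
    have h2 := Finset.card_biUnion_le (s := 𝒮)
      (t := fun S => ((univ : Finset (Fin t → Matrix (Fin m) (Fin n) F)).filter
        (fun ω => m0 ≤ (univ.filter (fun i => ω i ∈ Bad S)).card)))
    rw [Finset.card_univ] at h1
    exact lt_irrefl _ (lt_of_le_of_lt (h1.trans h2) hkey)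
  refine ⟨fun i => LinearMap.ker ((ω i).mulVecLin), ?_, ?_⟩
  · -- dimension bound : every code in the family has large dimension
    refine aux_ncard_ge _ univ (fun i _ => ?_) _ ?_
    · have hrn : Module.finrank F (LinearMap.range ((ω i).mulVecLin))
          + Module.finrank F (LinearMap.ker ((ω i).mulVecLin)) = n := by
        rw [LinearMap.finrank_range_add_finrank_ker, Module.finrank_fintype_fun_eq_card,
          Fintype.card_fin]
      have hrle : Module.finrank F (LinearMap.range ((ω i).mulVecLin)) ≤ m := by
        have h := Submodule.finrank_le (LinearMap.range ((ω i).mulVecLin))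
        rwa [Module.finrank_fintype_fun_eq_card, Fintype.card_fin] at h
      have hrnR : (Module.finrank F (LinearMap.range ((ω i).mulVecLin)) : ℝ)
          + (Module.finrank F (LinearMap.ker ((ω i).mulVecLin)) : ℝ) = n := by
        exact_mod_cast hrn
      have hrleR : (Module.finrank F (LinearMap.range ((ω i).mulVecLin)) : ℝ) ≤ m := by
        exact_mod_cast hrle
      nlinarith [hmle]
    · rw [Finset.card_univ, Fintype.card_fin]
      nlinarith [mul_nonneg hε0 (Nat.cast_nonneg (α := ℝ) t)]
  · -- correction bound
    intro S hS
    have hS𝒮 : S ∈ 𝒮 := by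
      rw [h𝒮def]
      exact mem_filter.mpr ⟨mem_univ _, hS⟩
    have hbadlt : (univ.filter (fun i => ω i ∈ Bad S)).card < m0 := by
      by_contra hcon
      push_neg at hcon
      exact hω S hS𝒮 (mem_filter.mpr ⟨mem_univ _, hcon⟩)
    have hbadle : ((univ.filter (fun i => ω i ∈ Bad S)).card : ℝ) ≤ ε * t := by
      have h1 : (univ.filter (fun i => ω i ∈ Bad S)).card ≤ ⌊ε * t⌋₊ := by
        rw [hm0def] at hbadlt
        exact Nat.lt_succ_iff.mp hbadlt
      calc ((univ.filter (fun i => ω i ∈ Bad S)).card : ℝ) ≤ (⌊ε * t⌋₊ : ℝ) := by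
            exact_mod_cast h1
        _ ≤ ε * t := Nat.floor_le (by positivity)
    refine aux_ncard_ge _ (univ.filter (fun i => ω i ∉ Bad S)) ?_ _ ?_
    · intro i hi
      simp only [mem_filter, mem_univ, true_and] at hi
      intro c hc c' hc' hagree
      by_contra hne
      apply hi
      rw [hBaddef]
      refine mem_filter.mpr ⟨mem_univ _, ⟨c - c', sub_ne_zero.mpr hne, ?_, ?_⟩⟩
      · intro j hj
        simp [hagree j hj]
      · have h1 : (ω i).mulVecLin (c - c') = 0 := by
          rw [map_sub, LinearMap.mem_ker.mp hc, LinearMap.mem_ker.mp hc', sub_self]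
        rwa [Matrix.mulVecLin_apply] at h1
    · have hsplit := Finset.card_filter_add_card_filter_not
        (s := (univ : Finset (Fin t))) (p := fun i => ω i ∈ Bad S)
      rw [Finset.card_univ, Fintype.card_fin] at hsplit
      have hcast : ((univ.filter (fun i => ω i ∉ Bad S)).card : ℝ)
          = (t:ℝ) - ((univ.filter (fun i => ω i ∈ Bad S)).card : ℝ) := by
        have h2 : (univ.filter (fun i => ω i ∈ Bad S)).card
            + (univ.filter (fun i => ω i ∉ Bad S)).card = t := hsplit
        have h3 : ((univ.filter (fun i => ω i ∈ Bad S)).card : ℝ)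
            + ((univ.filter (fun i => ω i ∉ Bad S)).card : ℝ) = t := by exact_mod_cast h2
        linarith
      rw [hcast]
      nlinarith [hbadle, mul_nonneg hε0 (Nat.cast_nonneg (α := ℝ) t)]


/-- Existence of erasure code families: there is an absolute constant `C > 0` such that
for any finite field `F_q`, any `δ ∈ [0,1)`, `η > 0`, `ε > 0`, and any `t, n` with
`t ≥ 2/(η·ε·log₂ q)` and `n ≥ C·log(1/ε)/(η·log q)`, there is a family of `t` linear
codes in `F_q^n` such that all but an `ε` fraction have dimension at least `(1-δ-η)·n`,
and for every `S ⊆ [n]` with `|S| ≤ δn`, all but an `ε` fraction of the codes correct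
the erasure pattern `S`. -/
theorem stmt_7 :
    ∃ C : ℝ, 0 < C ∧
      ∀ (F : Type) [Field F] [Fintype F], ∀ δ η ε : ℝ,
        0 ≤ δ → δ < 1 → 0 < η → 0 < ε →
        ∀ t n : ℕ,
          2 / (η * ε * Real.logb 2 (Fintype.card F)) ≤ (t : ℝ) →
          C * Real.log (1 / ε) / (η * Real.log (Fintype.card F)) ≤ (n : ℝ) →
          ∃ Cs : Fin t → Submodule F (Fin n → F),
            (1 - ε) * t ≤
              (({i : Fin t | (1 - δ - η) * n ≤ (Module.finrank F (Cs i) : ℝ)} :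
                Set (Fin t)).ncard : ℝ) ∧
            ∀ S : Finset (Fin n), (S.card : ℝ) ≤ δ * n →
              (1 - ε) * t ≤
                (({i : Fin t | ∀ c ∈ Cs i, ∀ c' ∈ Cs i,
                    (∀ j ∉ S, c j = c' j) → c = c'} : Set (Fin t)).ncard : ℝ) := by
  classical
  refine ⟨200, by norm_num, ?_⟩
  intro F _ _ δ η ε hδ0 hδ1 hη hε t n ht hnbig
  -- trivial case : ε ≥ 1
  by_cases hε1 : 1 ≤ ε
  · refine ⟨fun _ => ⊥, ?_, fun S _ => ?_⟩ <;>
    · have h1 : (1 - ε) * t ≤ 0 := mul_nonpos_of_nonpos_of_nonneg (by linarith) (Nat.cast_nonneg t)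
      exact le_trans h1 (Nat.cast_nonneg _)
  push_neg at hε1
  have hε0 : 0 ≤ ε := le_of_lt hε
  -- bottom code case : (1-δ-η)*n ≤ 0
  have hbotcorr : ∀ S : Finset (Fin n), (S.card : ℝ) ≤ δ * n →
      ∀ c ∈ (⊥ : Submodule F (Fin n → F)), ∀ c' ∈ (⊥ : Submodule F (Fin n → F)),
        (∀ j ∉ S, c j = c' j) → c = c' := by
    intro S _ c hc c' hc' _
    rw [Submodule.mem_bot] at hc hc'
    rw [hc, hc']
  by_cases hδη : 1 ≤ δ + η
  · refine aux_const_family t n δ η ε hε0 ⊥ ?_ hbotcorr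
    have : (Module.finrank F (⊥ : Submodule F (Fin n → F)) : ℝ) = 0 := by
      rw [finrank_bot]; norm_num
    rw [this]
    exact mul_nonpos_of_nonpos_of_nonneg (by linarith) (Nat.cast_nonneg n)
  push_neg at hδη
  by_cases hn0 : n = 0
  · subst hn0
    refine aux_const_family t 0 δ η ε hε0 ⊥ ?_ hbotcorr
    norm_num
  have hn1 : 1 ≤ n := Nat.pos_of_ne_zero hn0
  have hnR : (1:ℝ) ≤ (n:ℝ) := by exact_mod_cast hn1
  -- basic quantities
  have hq2 : 2 ≤ Fintype.card F := Fintype.one_lt_card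
  set q := Fintype.card F with hqdef
  have hqR : (2:ℝ) ≤ (q:ℝ) := by exact_mod_cast hq2
  have hq1 : (1:ℝ) < (q:ℝ) := by linarith
  have hL : (0:ℝ) < Real.log q := Real.log_pos hq1
  set L : ℝ := Real.log q with hLdef
  have hlog2 : (0:ℝ) < Real.log 2 := Real.log_pos (by norm_num)
  have hlogb : Real.logb 2 (q:ℝ) = L / Real.log 2 := rfl
  have hlogbpos : 0 < Real.logb 2 (q:ℝ) := Real.logb_pos (by norm_num) hq1
  -- t ≥ 1
  have htpos : 0 < t := by
    have h0 : (0:ℝ) < 2 / (η * ε * Real.logb 2 (q:ℝ)) := by positivity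
    have : (0:ℝ) < t := lt_of_lt_of_le h0 ht
    exact_mod_cast this
  have htR : (1:ℝ) ≤ (t:ℝ) := by exact_mod_cast htpos
  -- ε t lower bound
  have hεt : 2 * Real.log 2 / (η * L) ≤ ε * t := by
    have h := mul_le_mul_of_nonneg_left ht hε0
    have heq : ε * (2 / (η * ε * Real.logb 2 (q:ℝ))) = 2 * Real.log 2 / (η * L) := by
      rw [hlogb]
      field_simp
    rwa [heq] at h
  -- log(1/ε) bound
  have hlogε : Real.log (1 / ε) ≤ η * n * L / 200 := by
    have h := mul_le_mul_of_nonneg_left hnbig (le_of_lt (mul_pos hη hL))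
    have heq : η * L * (200 * Real.log (1 / ε) / (η * L)) = 200 * Real.log (1/ε) := by
      field_simp
    rw [heq] at h
    nlinarith [mul_pos hη hL]
  by_cases hmax : 3.5 ≤ η * n * L ∨ 3.5 ≤ L
  · exact aux_main F δ η ε t n hδ0 hη hε hε0 hε1 hn1 htpos hεt hlogε hmax
  · -- SMALL REGIME
    push_neg at hmax
    obtain ⟨hX35, hL35⟩ := hmax
    -- ε is close to 1
    have hεbig : (0.98:ℝ) ≤ ε := by
      have h1 : Real.log (1/ε) < 0.0175 := by
        calc Real.log (1/ε) ≤ η * n * L / 200 := hlogε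
          _ < 3.5 / 200 := by linarith
          _ = 0.0175 := by norm_num
      have h2 : (1:ℝ)/ε < Real.exp 0.0175 := by
        have := Real.exp_log (show (0:ℝ) < 1/ε by positivity)
        rw [← this]
        exact Real.exp_lt_exp.mpr h1
      have h3 : Real.exp (-0.0175) ≥ 1 - 0.0175 := by
        linarith [Real.add_one_le_exp (-0.0175:ℝ)]
      have h4 : Real.exp 0.0175 ≤ 1 / 0.9825 := by
        have hmul : Real.exp 0.0175 * Real.exp (-0.0175) = 1 := by
          rw [← Real.exp_add]; norm_num
        have hstep := mul_le_mul_of_nonneg_left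
          (show (0.9825:ℝ) ≤ Real.exp (-0.0175) by linarith)
          (Real.exp_pos (0.0175:ℝ)).le
        rw [le_div_iff₀ (by norm_num)]
        nlinarith [hstep, hmul]
      have h5 : (1:ℝ)/ε < 1/0.9825 := lt_of_lt_of_le h2 h4
      have h6 : (0.9825:ℝ) < ε := by
        rw [div_lt_div_iff₀ hε (by norm_num)] at h5
        linarith
      linarith
    by_cases ht2 : 2 ≤ t
    · -- mixed construction : a copies of ⊤ and t - a copies of ⊥
      obtain ⟨a, hadef⟩ : ∃ a : ℕ, a = ⌈(1 - ε) * t⌉₊ := ⟨_, rfl⟩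
      have hat : a ≤ t := by
        rw [hadef]
        apply Nat.ceil_le.mpr
        nlinarith [mul_nonneg hε0 (Nat.cast_nonneg (α := ℝ) t)]
      have htR2 : (2:ℝ) ≤ (t:ℝ) := by exact_mod_cast ht2
      have haεt : (a:ℝ) ≤ ε * t := by
        have h1 : (a:ℝ) < (1 - ε) * t + 1 := by
          rw [hadef]
          exact Nat.ceil_lt_add_one (mul_nonneg (by linarith) (Nat.cast_nonneg _))
        have h2 : (0.9:ℝ) * t ≤ (2 * ε - 1) * t :=
          mul_le_mul_of_nonneg_right (by linarith) (Nat.cast_nonneg _)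
        have h3 : (1:ℝ) ≤ 0.9 * t := by linarith
        linarith
      refine ⟨fun i => if (i:ℕ) < a then ⊤ else ⊥, ?_, ?_⟩
      · -- dimension: indices < a have code ⊤
        have hcardA : ((univ : Finset (Fin t)).filter (fun i : Fin t => (i:ℕ) < a)).card = a := by
          rcases eq_or_lt_of_le hat with h | h
          · rw [Finset.filter_true_of_mem, Finset.card_univ, Fintype.card_fin, h]
            intro i _
            rw [h]
            exact i.isLt
          · have heq : (univ : Finset (Fin t)).filter (fun i : Fin t => (i:ℕ) < a)
                = Finset.Iio (⟨a, h⟩ : Fin t) := by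
              ext i
              simp [Fin.lt_def]
            rw [heq, Fin.card_Iio]
        refine aux_ncard_ge _ ((univ : Finset (Fin t)).filter (fun i : Fin t => (i:ℕ) < a))
          ?_ _ ?_
        · intro i hi
          simp only [mem_filter, mem_univ, true_and] at hi
          beta_reduce
          rw [if_pos hi]
          have : (Module.finrank F (⊤ : Submodule F (Fin n → F)) : ℝ) = n := by
            rw [finrank_top, Module.finrank_fintype_fun_eq_card, Fintype.card_fin]
          rw [this]
          nlinarith [mul_nonneg (show (0:ℝ) ≤ δ + η by linarith) (Nat.cast_nonneg (α := ℝ) n)]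
        · rw [hcardA, hadef]
          exact Nat.le_ceil _
      · -- correction: indices ≥ a have code ⊥
        intro S hS
        have hcardA : ((univ : Finset (Fin t)).filter (fun i : Fin t => (i:ℕ) < a)).card = a := by
          rcases eq_or_lt_of_le hat with h | h
          · rw [Finset.filter_true_of_mem, Finset.card_univ, Fintype.card_fin, h]
            intro i _
            rw [h]
            exact i.isLt
          · have heq : (univ : Finset (Fin t)).filter (fun i : Fin t => (i:ℕ) < a)
                = Finset.Iio (⟨a, h⟩ : Fin t) := by
              ext i
              simp [Fin.lt_def]
            rw [heq, Fin.card_Iio]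
        have hcardB : ((univ : Finset (Fin t)).filter (fun i : Fin t => ¬((i:ℕ) < a))).card
            = t - a := by
          have := Finset.card_filter_add_card_filter_not
            (s := (univ : Finset (Fin t))) (p := fun i : Fin t => (i:ℕ) < a)
          rw [Finset.card_univ, Fintype.card_fin, hcardA] at this
          omega
        refine aux_ncard_ge _ ((univ : Finset (Fin t)).filter (fun i : Fin t => ¬((i:ℕ) < a)))
          ?_ _ ?_
        · intro i hi
          simp only [mem_filter, mem_univ, true_and] at hi
          beta_reduce
          rw [if_neg hi]
          intro c hc c' hc' _
          rw [Submodule.mem_bot] at hc hc'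
          rw [hc, hc']
        · rw [hcardB]
          have : ((t - a : ℕ) : ℝ) = (t:ℝ) - a := by
            rw [Nat.cast_sub hat]
          rw [this]
          linarith
    · -- t = 1 : tiny n
      have ht1 : t = 1 := by omega
      subst ht1
      have hηL : 2 * Real.log 2 < η * L := by
        have h1 : 2 * Real.log 2 / (η * L) ≤ ε * 1 := by simpa using hεt
        have h2 : ε * 1 < 1 := by linarith
        have h3 : 2 * Real.log 2 / (η * L) < 1 := lt_of_le_of_lt h1 h2
        have h4 : 0 < η * L := mul_pos hη hL
        rw [div_lt_one h4] at h3
        exact h3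
      have hn2 : n ≤ 2 := by
        by_contra hcon
        push_neg at hcon
        have h3 : (3:ℝ) ≤ (n:ℝ) := by exact_mod_cast hcon
        have : η * n * L = (n:ℝ) * (η * L) := by ring
        nlinarith [Real.log_two_gt_d9]
      interval_cases n
      · -- n = 1
        refine aux_const_family 1 1 δ η ε hε0 ⊤ ?_ ?_
        · have : (Module.finrank F (⊤ : Submodule F (Fin 1 → F)) : ℝ) = 1 := by
            rw [finrank_top, Module.finrank_fintype_fun_eq_card, Fintype.card_fin]
            norm_num
          rw [this]
          push_cast
          nlinarith
        · intro S hS c _ c' _ hagree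
          have hScard : S.card = 0 := by
            have : (S.card : ℝ) < 1 := by
              have hS' : (S.card:ℝ) ≤ δ * 1 := by exact_mod_cast hS
              linarith
            exact_mod_cast Nat.lt_one_iff.mp (by exact_mod_cast this)
          have hSempty : S = ∅ := Finset.card_eq_zero.mp hScard
          subst hSempty
          funext j
          exact hagree j (by simp)
      · -- n = 2
        by_cases hδ2 : δ * 2 < 1
        · -- S must be empty
          refine aux_const_family 1 2 δ η ε hε0 ⊤ ?_ ?_
          · have : (Module.finrank F (⊤ : Submodule F (Fin 2 → F)) : ℝ) = 2 := by
              rw [finrank_top, Module.finrank_fintype_fun_eq_card, Fintype.card_fin]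
              norm_num
            rw [this]
            push_cast
            nlinarith
          · intro S hS c _ c' _ hagree
            have hScard : S.card = 0 := by
              have hS' : (S.card:ℝ) ≤ δ * 2 := by exact_mod_cast hS
              have : (S.card : ℝ) < 1 := by linarith
              exact_mod_cast Nat.lt_one_iff.mp (by exact_mod_cast this)
            have hSempty : S = ∅ := Finset.card_eq_zero.mp hScard
            subst hSempty
            funext j
            exact hagree j (by simp)
        · -- repetition code
          push_neg at hδ2
          set f : (Fin 2 → F) →ₗ[F] F :=
            { toFun := fun c => c 0 - c 1,
              map_add' := fun x y => by
                simp only [Pi.add_apply]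
                ring,
              map_smul' := fun r x => by
                simp only [Pi.smul_apply, smul_eq_mul, RingHom.id_apply]
                ring } with hfdef
          have hfapp : ∀ c : Fin 2 → F, f c = c 0 - c 1 := fun _ => rfl
          have hker : ∀ c : Fin 2 → F, c ∈ LinearMap.ker f ↔ c 0 = c 1 := by
            intro c
            rw [LinearMap.mem_ker, hfapp, sub_eq_zero]
          refine aux_const_family 1 2 δ η ε hε0 (LinearMap.ker f) ?_ ?_
          · -- dimension at least 1
            have hrange : Module.finrank F (LinearMap.range f) ≤ 1 := by
              have := Submodule.finrank_le (LinearMap.range f)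
              rwa [Module.finrank_self] at this
            have hrn : Module.finrank F (LinearMap.range f)
                + Module.finrank F (LinearMap.ker f) = 2 := by
              rw [LinearMap.finrank_range_add_finrank_ker,
                Module.finrank_fintype_fun_eq_card, Fintype.card_fin]
            have h1 : 1 ≤ Module.finrank F (LinearMap.ker f) := by omega
            have h1R : (1:ℝ) ≤ (Module.finrank F (LinearMap.ker f) : ℝ) := by exact_mod_cast h1
            push_cast
            linarith
          · intro S hS c hc c' hc' hagree
            rw [hker] at hc hc'
            have hScard : S.card ≤ 1 := by
              have h1 : (S.card : ℝ) < 2 := by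
                calc (S.card:ℝ) ≤ δ * 2 := hS
                  _ < 2 := by linarith
              have : S.card < 2 := by exact_mod_cast h1
              omega
            have hkey : ∃ j, j ∉ S := by
              by_contra hcon
              push_neg at hcon
              have : (univ : Finset (Fin 2)) ⊆ S := fun j _ => hcon j
              have := Finset.card_le_card this
              rw [Finset.card_univ, Fintype.card_fin] at this
              omega
            obtain ⟨j, hj⟩ := hkey
            have hcc : c j = c' j := hagree j hj
            have hc0 : c 0 = c' 0 := by
              fin_cases j
              · exact hcc
              · rw [hc, hc']
                exact hcc
            funext k
            match k with
            | 0 => exact hc0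
            | 1 => rw [← hc, ← hc', hc0]
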